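/- Update answer sets satisfy postulate (I3): if the fact L_0 ← belongs to Bel((P⃗, {L_1 ←, ..., L_k ←})), then the rule L_0 ← L_1,...,L_k belongs to Bel(P⃗). -/

import Mathlib

/-- A literal over atoms `α`: an atom or a strongly negated atom. -/
inductive Lit (α : Type) where
  | pos : α → Lit α
  | neg : α → Lit α

/-- The complementary literal. -/
def Lit.compl {α : Type} : Lit α → Lit α
  | .pos a => .neg a
  | .neg a => .pos a

/-- A rule of an extended logic program: optional head literal,
prerequisites `prem`, and weakly negated body literals `nbody`. -/
structure Rule (α : Type) where
  head : Option (Lit α)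
  prem : Set (Lit α)
  nbody : Set (Lit α)

/-- A set of literals is consistent iff it contains no complementary pair. -/
def Consistent {α : Type} (S : Set (Lit α)) : Prop :=
  ∀ a : α, ¬ (Lit.pos a ∈ S ∧ Lit.neg a ∈ S)

/-- The body of `r` is true in `S`. -/
def BodyTrue {α : Type} (S : Set (Lit α)) (r : Rule α) : Prop :=
  r.prem ⊆ S ∧ ∀ L ∈ r.nbody, L ∉ S

/-- The head of `r` is true in `S` (false for constraints). -/
def HeadTrue {α : Type} (S : Set (Lit α)) (r : Rule α) : Prop :=
  ∃ L, r.head = some L ∧ L ∈ S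

/-- Rule `r` is true in `S`. -/
def RuleTrue {α : Type} (S : Set (Lit α)) (r : Rule α) : Prop :=
  BodyTrue S r → HeadTrue S r

/-- `S` is a model of program `P`. -/
def IsModel {α : Type} (S : Set (Lit α)) (P : Set (Rule α)) : Prop :=
  ∀ r ∈ P, RuleTrue S r

/-- `r` is defeated by `S`. -/
def Defeated {α : Type} (S : Set (Lit α)) (r : Rule α) : Prop :=
  ∃ L ∈ r.nbody, L ∈ S

/-- The Gelfond–Lifschitz reduct of `P` relative to `S`. -/
def Reduct {α : Type} (P : Set (Rule α)) (S : Set (Lit α)) : Set (Rule α) :=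
  { r' | ∃ r ∈ P, ¬ Defeated S r ∧ r' = Rule.mk r.head r.prem ∅ }

/-- `S` is an answer set of `P`: a consistent set of literals that is a
minimal model of the reduct `P^S`. -/
def IsAnswerSet {α : Type} (P : Set (Rule α)) (S : Set (Lit α)) : Prop :=
  Consistent S ∧ IsModel S (Reduct P S) ∧
    ∀ T ⊆ S, IsModel T (Reduct P S) → T = S

/-- The belief set of `P`: all rules true in every answer set of `P`. -/
def Bel {α : Type} (P : Set (Rule α)) : Set (Rule α) :=
  { r | ∀ S, IsAnswerSet P S → RuleTrue S r }
/-- Extended alphabet `At*`: original atoms, indexed copies `A_i`,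
and rejection atoms `rej(r)` for (named copies of) rules. -/
inductive ExtAtom (α : Type) where
  | base : α → ExtAtom α
  | idx : ℕ → α → ExtAtom α
  | rej : ℕ → Rule α → ExtAtom α

/-- Lift a literal over `α` to the corresponding literal over `At*`. -/
def liftLit {α : Type} : Lit α → Lit (ExtAtom α)
  | .pos a => .pos (.base a)
  | .neg a => .neg (.base a)

/-- The indexed copy `L_i` of a literal `L`. -/
def idxLit {α : Type} (i : ℕ) : Lit α → Lit (ExtAtom α)
  | .pos a => .pos (.idx i a)
  | .neg a => .neg (.idx i a)

/-- Literal `L` occurs in the update sequence `(P 0, …, P (n-1))`. -/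
def OccursIn {α : Type} (n : ℕ) (P : ℕ → Set (Rule α)) (L : Lit α) : Prop :=
  ∃ i < n, ∃ r ∈ P i, r.head = some L ∨ L ∈ r.prem ∨ L ∈ r.nbody

/-- The update program `P_◁` of the update sequence `(P 0, …, P (n-1))`,
an ELP over the extended alphabet `At*`. -/
def UpdProgram {α : Type} (n : ℕ) (P : ℕ → Set (Rule α)) : Set (Rule (ExtAtom α)) :=
  -- (i) all constraints
  { r' | ∃ i < n, ∃ r ∈ P i, r.head = none ∧
      r' = Rule.mk none (liftLit '' r.prem) (liftLit '' r.nbody) } ∪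
  -- (ii)  L_i ← B(r), not rej(r)
  { r' | ∃ i < n, ∃ r ∈ P i, ∃ L, r.head = some L ∧
      r' = Rule.mk (some (idxLit i L)) (liftLit '' r.prem)
             ((liftLit '' r.nbody) ∪ {Lit.pos (ExtAtom.rej i r)}) } ∪
  -- (iii)  rej(r) ← B(r), ¬L_{i+1}
  { r' | ∃ i, i + 1 < n ∧ ∃ r ∈ P i, ∃ L, r.head = some L ∧
      r' = Rule.mk (some (Lit.pos (ExtAtom.rej i r)))
             ((liftLit '' r.prem) ∪ {idxLit (i+1) L.compl}) (liftLit '' r.nbody) } ∪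
  -- (iv) inertia rules  L_i ← L_{i+1}  and  L ← L_1
  { r' | ∃ L, OccursIn n P L ∧
      ((∃ i, i + 1 < n ∧ r' = Rule.mk (some (idxLit i L)) {idxLit (i+1) L} ∅) ∨
        r' = Rule.mk (some (liftLit L)) {idxLit 0 L} ∅) }

/-- `S` is an update answer set of the sequence `(P 0, …, P (n-1))`:
the restriction to `Lit_At` of an answer set of the update program. -/
def UpdateAnswerSet {α : Type} (n : ℕ) (P : ℕ → Set (Rule α)) (S : Set (Lit α)) : Prop :=
  ∃ S' : Set (Lit (ExtAtom α)), IsAnswerSet (UpdProgram n P) S' ∧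
    S = { L | liftLit L ∈ S' }

/-- Two rules are conflicting iff their heads are complementary literals. -/
def Conflicting {α : Type} (r r' : Rule α) : Prop :=
  ∃ L, r.head = some L ∧ r'.head = some L.compl

/-- The founded rejection set at level `i`: rules of `P i` rejected by a
conflicting, itself non-rejected rule of some later program. -/
def RejLevel {α : Type} (n : ℕ) (P : ℕ → Set (Rule α)) (S : Set (Lit α)) (i : ℕ) :
    Set (Rule α) :=
  { r | r ∈ P i ∧ ∃ j, ∃ _ : i < j, ∃ _ : j < n, ∃ r',
      r' ∈ P j ∧ r' ∉ RejLevel n P S j ∧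
      Conflicting r r' ∧ BodyTrue S r ∧ BodyTrue S r' }
  termination_by n - i
  decreasing_by omega

/-- The founded rejection set `Rej(S, P⃗)`. -/
def Rej {α : Type} (n : ℕ) (P : ℕ → Set (Rule α)) (S : Set (Lit α)) : Set (Rule α) :=
  { r | ∃ i < n, r ∈ RejLevel n P S i }

/-- The union `∪P⃗` of all rules of the sequence. -/
def UnionSeq {α : Type} (n : ℕ) (P : ℕ → Set (Rule α)) : Set (Rule α) :=
  { r | ∃ i < n, r ∈ P i }

/-- The belief set of an update sequence: all rules true in every update
answer set. -/
def BelSeq {α : Type} (n : ℕ) (P : ℕ → Set (Rule α)) : Set (Rule α) :=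
  { r | ∀ S, UpdateAnswerSet n P S → RuleTrue S r }

/-- Append one program to a sequence of length `n`. -/
def append1 {α : Type} (n : ℕ) (P : ℕ → Set (Rule α)) (Q : Set (Rule α)) :
    ℕ → Set (Rule α) :=
  fun i => if i < n then P i else Q

section I3Aux
variable {α : Type}

theorem lift_ne_idx (L M : Lit α) (i : ℕ) : liftLit L ≠ idxLit i M := by
  cases L <;> cases M <;> simp [liftLit, idxLit]

theorem lift_ne_rej (M : Lit α) (j : ℕ) (r : Rule α) :
    liftLit M ≠ Lit.pos (ExtAtom.rej j r) := by
  cases M <;> simp [liftLit]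

theorem idx_ne_rej (M : Lit α) (i j : ℕ) (r : Rule α) :
    idxLit i M ≠ Lit.pos (ExtAtom.rej j r) := by
  cases M <;> simp [idxLit]

theorem idx_inj {L M : Lit α} {i j : ℕ} (h : idxLit i L = idxLit j M) :
    i = j ∧ L = M := by
  cases L <;> cases M <;> simp_all [idxLit]

theorem lift_inj {L M : Lit α} (h : liftLit L = liftLit M) : L = M := by
  cases L <;> cases M <;> simp_all [liftLit]

theorem compl_compl' (L : Lit α) : L.compl.compl = L := by
  cases L <;> rfl

theorem pos_eq_idx {a : ExtAtom α} {i : ℕ} {M : Lit α}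
    (h : Lit.pos a = idxLit i M) : ∃ b, a = ExtAtom.idx i b ∧ M = Lit.pos b := by
  cases M <;> simp_all [idxLit]

theorem neg_eq_idx {a : ExtAtom α} {i : ℕ} {M : Lit α}
    (h : Lit.neg a = idxLit i M) : ∃ b, a = ExtAtom.idx i b ∧ M = Lit.neg b := by
  cases M <;> simp_all [idxLit]

theorem not_both_lift {S : Set (Lit (ExtAtom α))} (hc : Consistent S) (M : Lit α)
    (h1 : liftLit M ∈ S) (h2 : liftLit M.compl ∈ S) : False := by
  cases M with
  | pos a => exact hc (ExtAtom.base a) ⟨h1, h2⟩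
  | neg a => exact hc (ExtAtom.base a) ⟨h2, h1⟩

/-- Every member of an answer set is supported by a rule of the program. -/
theorem supported {P : Set (Rule α)} {S : Set (Lit α)} (h : IsAnswerSet P S)
    {x : Lit α} (hx : x ∈ S) :
    ∃ r ∈ P, ¬ Defeated S r ∧ r.head = some x ∧ r.prem ⊆ S := by
  by_contra hc
  push_neg at hc
  have hT : IsModel (S \ {x}) (Reduct P S) := by
    rintro r' ⟨r, hrP, hnd, rfl⟩ hb
    have hprem : r.prem ⊆ S \ {x} := hb.1
    have hpremS : r.prem ⊆ S := hprem.trans Set.diff_subset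
    have hHS : HeadTrue S (Rule.mk r.head r.prem ∅) :=
      h.2.1 _ ⟨r, hrP, hnd, rfl⟩ ⟨hpremS, by intro L hL; exact absurd hL (Set.notMem_empty L)⟩
    obtain ⟨L, hL, hLS⟩ := hHS
    refine ⟨L, hL, hLS, ?_⟩
    intro hLx
    rw [Set.mem_singleton_iff] at hLx
    subst hLx
    exact hc r hrP hnd hL hpremS
  have heq := h.2.2 (S \ {x}) Set.diff_subset hT
  rw [← heq] at hx
  exact hx.2 rfl

/-- Applying a non-defeated rule of the program in an answer set. -/
theorem apply_rule {P : Set (Rule α)} {S : Set (Lit α)} (h : IsAnswerSet P S)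
    {r : Rule α} (hr : r ∈ P) (hnd : ¬ Defeated S r) (hp : r.prem ⊆ S)
    {x : Lit α} (hh : r.head = some x) : x ∈ S := by
  have hHS : HeadTrue S (Rule.mk r.head r.prem ∅) :=
    h.2.1 _ ⟨r, hr, hnd, rfl⟩ ⟨hp, by intro L hL; exact absurd hL (Set.notMem_empty L)⟩
  obtain ⟨L, hL, hLS⟩ := hHS
  have : r.head = some L := hL
  rw [hh] at this
  injection this with hxL
  exact hxL ▸ hLS

/-- Any indexed literal in an answer set of the update program has index `< n`
and the underlying literal occurs in the sequence. -/
theorem idx_mem {n : ℕ} {Pseq : ℕ → Set (Rule α)} {S' : Set (Lit (ExtAtom α))}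
    (hS' : IsAnswerSet (UpdProgram n Pseq) S') {i : ℕ} {M : Lit α}
    (h : idxLit i M ∈ S') : i < n ∧ OccursIn n Pseq M := by
  obtain ⟨r, hrU, hnd, hh, hp⟩ := supported hS' h
  simp only [UpdProgram, Set.mem_union, Set.mem_setOf_eq] at hrU
  rcases hrU with (((⟨i', hi', rr, hrr, hhn, rfl⟩ | ⟨i', hi', rr, hrr, L, hL, rfl⟩) |
      ⟨i', hi', rr, hrr, L, hL, rfl⟩) | ⟨L, hocc, (⟨i', hi', rfl⟩ | rfl)⟩)
  · simp at hh
  · simp only at hh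
    injection hh with hh
    obtain ⟨rfl, rfl⟩ := idx_inj hh
    exact ⟨hi', i', hi', rr, hrr, Or.inl hL⟩
  · simp only at hh
    injection hh with hh
    exact absurd hh.symm (idx_ne_rej _ _ _ _)
  · simp only at hh
    injection hh with hh
    obtain ⟨rfl, rfl⟩ := idx_inj hh
    exact ⟨by omega, hocc⟩
  · simp only at hh
    injection hh with hh
    exact absurd hh (lift_ne_idx _ _ _)

theorem idx_down {n : ℕ} {Pseq : ℕ → Set (Rule α)} {S' : Set (Lit (ExtAtom α))}
    (hS' : IsAnswerSet (UpdProgram n Pseq) S') :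
    ∀ i (M : Lit α), idxLit i M ∈ S' → liftLit M ∈ S' := by
  have key : ∀ i (M : Lit α), idxLit i M ∈ S' → idxLit 0 M ∈ S' := by
    intro i
    induction i with
    | zero => exact fun M h => h
    | succ i ih =>
      intro M h
      obtain ⟨hn, hocc⟩ := idx_mem hS' h
      have hrU : Rule.mk (some (idxLit i M)) {idxLit (i+1) M} ∅ ∈ UpdProgram n Pseq := by
        simp only [UpdProgram, Set.mem_union, Set.mem_setOf_eq]
        exact Or.inr ⟨M, hocc, Or.inl ⟨i, hn, rfl⟩⟩
      have hmem : idxLit i M ∈ S' := by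
        refine apply_rule hS' hrU ?_ ?_ rfl
        · rintro ⟨x, hx, -⟩; exact Set.notMem_empty x hx
        · exact Set.singleton_subset_iff.2 h
      exact ih M hmem
  intro i M h
  have h0 := key i M h
  obtain ⟨hn, hocc⟩ := idx_mem hS' h0
  have hrU : Rule.mk (some (liftLit M)) {idxLit 0 M} ∅ ∈ UpdProgram n Pseq := by
    simp only [UpdProgram, Set.mem_union, Set.mem_setOf_eq]
    exact Or.inr ⟨M, hocc, Or.inr rfl⟩
  refine apply_rule hS' hrU ?_ ?_ rfl
  · rintro ⟨x, hx, -⟩; exact Set.notMem_empty x hx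
  · exact Set.singleton_subset_iff.2 h0

end I3Aux

section I3Main
variable {α : Type} {n k : ℕ} {Pseq : ℕ → Set (Rule α)} {Ls : ℕ → Lit α}
  {S' : Set (Lit (ExtAtom α))}

theorem main_cons (hS' : IsAnswerSet (UpdProgram n Pseq) S')
    (hLs : ∀ j < k, liftLit (Ls j) ∈ S') :
    Consistent (S' ∪ { x | ∃ j < k, ∃ i ≤ n, x = idxLit i (Ls j) }) := by
  rintro a ⟨hpa, hna⟩
  rcases hpa with hp | hp <;> rcases hna with hn | hn
  · exact hS'.1 a ⟨hp, hn⟩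
  · obtain ⟨j, hj, i, hi, he⟩ := hn
    obtain ⟨b, rfl, hLsj⟩ := neg_eq_idx he
    have h1 : liftLit (Lit.pos b) ∈ S' := idx_down hS' i (Lit.pos b) hp
    have h2 : liftLit (Lit.neg b) ∈ S' := by rw [← hLsj]; exact hLs j hj
    exact hS'.1 (ExtAtom.base b) ⟨h1, h2⟩
  · obtain ⟨j, hj, i, hi, he⟩ := hp
    obtain ⟨b, rfl, hLsj⟩ := pos_eq_idx he
    have h1 : liftLit (Lit.neg b) ∈ S' := idx_down hS' i (Lit.neg b) hn
    have h2 : liftLit (Lit.pos b) ∈ S' := by rw [← hLsj]; exact hLs j hj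
    exact hS'.1 (ExtAtom.base b) ⟨h2, h1⟩
  · obtain ⟨j, hj, i, hi, he⟩ := hp
    obtain ⟨b, rfl, hLsj⟩ := pos_eq_idx he
    obtain ⟨j', hj', i', hi', he'⟩ := hn
    obtain ⟨b', hb', hLsj'⟩ := neg_eq_idx he'
    injection hb' with h1 h2
    subst h2
    have hA : liftLit (Lit.pos b) ∈ S' := by rw [← hLsj]; exact hLs j hj
    have hB : liftLit (Lit.neg b) ∈ S' := by rw [← hLsj']; exact hLs j' hj'
    exact hS'.1 (ExtAtom.base b) ⟨hA, hB⟩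

theorem main_model (hS' : IsAnswerSet (UpdProgram n Pseq) S')
    (hLs : ∀ j < k, liftLit (Ls j) ∈ S') :
    IsModel (S' ∪ { x | ∃ j < k, ∃ i ≤ n, x = idxLit i (Ls j) })
      (Reduct (UpdProgram (n+1) (append1 n Pseq { r | ∃ i < k, r = Rule.mk (some (Ls i)) ∅ ∅ }))
        (S' ∪ { x | ∃ j < k, ∃ i ≤ n, x = idxLit i (Ls j) })) := by
  set New : Set (Lit (ExtAtom α)) := { x | ∃ j < k, ∃ i ≤ n, x = idxLit i (Ls j) } with hNew
  set Q : Set (Rule α) := { r | ∃ i < k, r = Rule.mk (some (Ls i)) ∅ ∅ } with hQ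
  have hliftS'' : ∀ L : Lit α, liftLit L ∈ S' ∪ New ↔ liftLit L ∈ S' := by
    intro L
    constructor
    · rintro (hL | ⟨j, hj, i, hi, he⟩)
      · exact hL
      · exact absurd he (lift_ne_idx _ _ _)
    · exact fun hL => Or.inl hL
  have hP'lt : ∀ i, i < n → append1 n Pseq Q i = Pseq i := by
    intro i hi; simp [append1, hi]
  have hP'n : append1 n Pseq Q n = Q := by simp [append1]
  rintro r' ⟨r, hrU, hnd, rfl⟩ hb
  obtain ⟨hbp, -⟩ := hb
  simp only [UpdProgram, Set.mem_union, Set.mem_setOf_eq] at hrU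
  rcases hrU with (((⟨i, hi, rr, hrr, hhn, rfl⟩ | ⟨i, hi, rr, hrr, L, hL, rfl⟩) |
      ⟨i, hi, rr, hrr, L, hL, rfl⟩) | ⟨L, hocc, (⟨i, hi, rfl⟩ | rfl)⟩)
  · -- constraints
    rcases Nat.lt_succ_iff_lt_or_eq.mp hi with hi' | rfl
    · exfalso
      rw [hP'lt i hi'] at hrr
      have hrU2 : Rule.mk none (liftLit '' rr.prem) (liftLit '' rr.nbody) ∈ UpdProgram n Pseq := by
        simp only [UpdProgram, Set.mem_union, Set.mem_setOf_eq]
        exact Or.inl (Or.inl (Or.inl ⟨i, hi', rr, hrr, hhn, rfl⟩))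
      have hnd' : ¬ Defeated S' (Rule.mk none (liftLit '' rr.prem) (liftLit '' rr.nbody)) :=
        fun ⟨x, hx1, hx2⟩ => hnd ⟨x, hx1, Or.inl hx2⟩
      have hp' : liftLit '' rr.prem ⊆ S' := by
        rintro x ⟨y, hy, rfl⟩
        exact (hliftS'' y).1 (hbp ⟨y, hy, rfl⟩)
      have hHS := hS'.2.1 _ ⟨_, hrU2, hnd', rfl⟩
        ⟨hp', by intro L hL; exact absurd hL (Set.notMem_empty L)⟩
      obtain ⟨M, hM, -⟩ := hHS
      exact Option.some_ne_none _ hM.symm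
    · rw [hP'n] at hrr
      obtain ⟨j, hj, rfl⟩ := hrr
      exact (Option.some_ne_none _ hhn).elim
  · -- (ii)
    rcases Nat.lt_succ_iff_lt_or_eq.mp hi with hi' | rfl
    · rw [hP'lt i hi'] at hrr
      have hrU2 : Rule.mk (some (idxLit i L)) (liftLit '' rr.prem)
          ((liftLit '' rr.nbody) ∪ {Lit.pos (ExtAtom.rej i rr)}) ∈ UpdProgram n Pseq := by
        simp only [UpdProgram, Set.mem_union, Set.mem_setOf_eq]
        exact Or.inl (Or.inl (Or.inr ⟨i, hi', rr, hrr, L, hL, rfl⟩))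
      have hnd' : ¬ Defeated S' (Rule.mk (some (idxLit i L)) (liftLit '' rr.prem)
          ((liftLit '' rr.nbody) ∪ {Lit.pos (ExtAtom.rej i rr)})) :=
        fun ⟨x, hx1, hx2⟩ => hnd ⟨x, hx1, Or.inl hx2⟩
      have hp' : liftLit '' rr.prem ⊆ S' := by
        rintro x ⟨y, hy, rfl⟩
        exact (hliftS'' y).1 (hbp ⟨y, hy, rfl⟩)
      exact ⟨_, rfl, Or.inl (apply_rule hS' hrU2 hnd' hp' rfl)⟩
    · rw [hP'n] at hrr
      obtain ⟨j, hj, rfl⟩ := hrr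
      injection hL with hL
      exact ⟨_, rfl, Or.inr ⟨j, hj, _, le_rfl, by rw [hL]⟩⟩
  · -- (iii)
    have hi' : i < n := by omega
    rw [hP'lt i hi'] at hrr
    have hidx : idxLit (i+1) L.compl ∈ S' ∪ New := hbp (Or.inr rfl)
    have hpl : liftLit '' rr.prem ⊆ S' := by
      rintro x ⟨y, hy, rfl⟩
      exact (hliftS'' y).1 (hbp (Or.inl ⟨y, hy, rfl⟩))
    have hndl : ∀ x ∈ liftLit '' rr.nbody, x ∉ S' := fun x hx hxS => hnd ⟨x, hx, Or.inl hxS⟩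
    rcases hidx with hidx | hidx
    · obtain ⟨hn1, -⟩ := idx_mem hS' hidx
      have hrU2 : Rule.mk (some (Lit.pos (ExtAtom.rej i rr)))
          ((liftLit '' rr.prem) ∪ {idxLit (i+1) L.compl}) (liftLit '' rr.nbody)
          ∈ UpdProgram n Pseq := by
        simp only [UpdProgram, Set.mem_union, Set.mem_setOf_eq]
        exact Or.inl (Or.inr ⟨i, hn1, rr, hrr, L, hL, rfl⟩)
      have hnd' : ¬ Defeated S' (Rule.mk (some (Lit.pos (ExtAtom.rej i rr)))
          ((liftLit '' rr.prem) ∪ {idxLit (i+1) L.compl}) (liftLit '' rr.nbody)) :=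
        fun ⟨x, hx1, hx2⟩ => hndl x hx1 hx2
      have hp' : (liftLit '' rr.prem) ∪ {idxLit (i+1) L.compl} ⊆ S' := by
        rintro x (hx | hx)
        · exact hpl hx
        · rw [Set.mem_singleton_iff] at hx
          rw [hx]; exact hidx
      exact ⟨_, rfl, Or.inl (apply_rule hS' hrU2 hnd' hp' rfl)⟩
    · obtain ⟨j, hj, i2, hi2, he⟩ := hidx
      obtain ⟨-, hLc⟩ := idx_inj he
      by_cases hrej : Lit.pos (ExtAtom.rej i rr) ∈ S'
      · exact ⟨_, rfl, Or.inl hrej⟩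
      · exfalso
        have hrU2 : Rule.mk (some (idxLit i L)) (liftLit '' rr.prem)
            ((liftLit '' rr.nbody) ∪ {Lit.pos (ExtAtom.rej i rr)}) ∈ UpdProgram n Pseq := by
          simp only [UpdProgram, Set.mem_union, Set.mem_setOf_eq]
          exact Or.inl (Or.inl (Or.inr ⟨i, hi', rr, hrr, L, hL, rfl⟩))
        have hnd2 : ¬ Defeated S' (Rule.mk (some (idxLit i L)) (liftLit '' rr.prem)
            ((liftLit '' rr.nbody) ∪ {Lit.pos (ExtAtom.rej i rr)})) := by
          rintro ⟨x, hx1 | hx1, hx2⟩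
          · exact hndl x hx1 hx2
          · rw [Set.mem_singleton_iff] at hx1
            rw [hx1] at hx2; exact hrej hx2
        have hmem := apply_rule hS' hrU2 hnd2 hpl rfl
        have hlift := idx_down hS' i L hmem
        have hLsS : liftLit (Ls j) ∈ S' := hLs j hj
        rw [← hLc] at hLsS
        exact not_both_lift hS'.1 L hlift hLsS
  · -- (iv)(a)
    have hidx : idxLit (i+1) L ∈ S' ∪ New := hbp rfl
    rcases hidx with hidx | hidx
    · obtain ⟨hn1, hocc'⟩ := idx_mem hS' hidx
      have hrU2 : Rule.mk (some (idxLit i L)) {idxLit (i+1) L} (∅ : Set (Lit (ExtAtom α)))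
          ∈ UpdProgram n Pseq := by
        simp only [UpdProgram, Set.mem_union, Set.mem_setOf_eq]
        exact Or.inr ⟨L, hocc', Or.inl ⟨i, hn1, rfl⟩⟩
      have hmem := apply_rule hS' hrU2 (by rintro ⟨x, hx, -⟩; exact Set.notMem_empty x hx)
        (Set.singleton_subset_iff.2 hidx) rfl
      exact ⟨_, rfl, Or.inl hmem⟩
    · obtain ⟨j, hj, i2, hi2, he⟩ := hidx
      obtain ⟨h1, h2⟩ := idx_inj he
      exact ⟨_, rfl, Or.inr ⟨j, hj, i, by omega, by rw [h2]⟩⟩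
  · -- (iv)(b)
    have hidx : idxLit 0 L ∈ S' ∪ New := hbp rfl
    rcases hidx with hidx | hidx
    · exact ⟨_, rfl, Or.inl (idx_down hS' 0 L hidx)⟩
    · obtain ⟨j, hj, i2, hi2, he⟩ := hidx
      obtain ⟨-, h2⟩ := idx_inj he
      exact ⟨_, rfl, Or.inl (by rw [h2]; exact hLs j hj)⟩

end I3Main

section I3Min
variable {α : Type} {n k : ℕ} {Pseq : ℕ → Set (Rule α)} {Ls : ℕ → Lit α}
  {S' : Set (Lit (ExtAtom α))}

theorem main_min (hS' : IsAnswerSet (UpdProgram n Pseq) S')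
    (hLs : ∀ j < k, liftLit (Ls j) ∈ S') :
    ∀ T ⊆ (S' ∪ { x | ∃ j < k, ∃ i ≤ n, x = idxLit i (Ls j) }),
      IsModel T (Reduct (UpdProgram (n+1) (append1 n Pseq { r | ∃ i < k, r = Rule.mk (some (Ls i)) ∅ ∅ }))
        (S' ∪ { x | ∃ j < k, ∃ i ≤ n, x = idxLit i (Ls j) })) →
      T = S' ∪ { x | ∃ j < k, ∃ i ≤ n, x = idxLit i (Ls j) } := by
  set New : Set (Lit (ExtAtom α)) := { x | ∃ j < k, ∃ i ≤ n, x = idxLit i (Ls j) } with hNew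
  set Q : Set (Rule α) := { r | ∃ i < k, r = Rule.mk (some (Ls i)) ∅ ∅ } with hQ
  have hP'lt : ∀ i, i < n → append1 n Pseq Q i = Pseq i := by
    intro i hi; simp [append1, hi]
  have hP'n : append1 n Pseq Q n = Q := by simp [append1]
  have hUmono : UpdProgram n Pseq ⊆ UpdProgram (n+1) (append1 n Pseq Q) := by
    intro r hr
    simp only [UpdProgram, Set.mem_union, Set.mem_setOf_eq] at hr ⊢
    rcases hr with (((⟨i, hi, rr, hrr, h1, h2⟩ | ⟨i, hi, rr, hrr, L, hL, h2⟩) |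
        ⟨i, hi, rr, hrr, L, hL, h2⟩) | ⟨L, ⟨i, hi, rr, hrr, hocc⟩, hcase⟩)
    · exact Or.inl (Or.inl (Or.inl ⟨i, by omega, rr, (hP'lt i hi).symm ▸ hrr, h1, h2⟩))
    · exact Or.inl (Or.inl (Or.inr ⟨i, by omega, rr, (hP'lt i hi).symm ▸ hrr, L, hL, h2⟩))
    · exact Or.inl (Or.inr ⟨i, by omega, rr, (hP'lt i (by omega)).symm ▸ hrr, L, hL, h2⟩)
    · refine Or.inr ⟨L, ⟨i, by omega, rr, (hP'lt i hi).symm ▸ hrr, hocc⟩, ?_⟩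
      rcases hcase with ⟨i', hi', h2⟩ | h2
      · exact Or.inl ⟨i', by omega, h2⟩
      · exact Or.inr h2
  have hnbodyNew : ∀ r ∈ UpdProgram n Pseq, ∀ x ∈ r.nbody, x ∉ New := by
    intro r hr x hx hxN
    obtain ⟨j, hj, i0, hi0, rfl⟩ := hxN
    simp only [UpdProgram, Set.mem_union, Set.mem_setOf_eq] at hr
    rcases hr with (((⟨i, hi, rr, hrr, h1, rfl⟩ | ⟨i, hi, rr, hrr, L, hL, rfl⟩) |
        ⟨i, hi, rr, hrr, L, hL, rfl⟩) | ⟨L, hocc, (⟨i, hi, rfl⟩ | rfl)⟩)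
    · obtain ⟨y, -, hy⟩ := hx
      exact lift_ne_idx y _ _ hy
    · rcases hx with ⟨y, -, hy⟩ | hy
      · exact lift_ne_idx y _ _ hy
      · rw [Set.mem_singleton_iff] at hy
        exact idx_ne_rej _ _ _ _ hy
    · obtain ⟨y, -, hy⟩ := hx
      exact lift_ne_idx y _ _ hy
    · exact Set.notMem_empty _ hx
    · exact Set.notMem_empty _ hx
  intro T hTsub hTmod
  have hrejn : ∀ j < k, Lit.pos (ExtAtom.rej n (Rule.mk (some (Ls j)) ∅ ∅)) ∉ S' ∪ New := by
    rintro j hj (hmem | hmem)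
    · obtain ⟨r, hrU, -, hh, -⟩ := supported hS' hmem
      simp only [UpdProgram, Set.mem_union, Set.mem_setOf_eq] at hrU
      rcases hrU with (((⟨i, hi, rr, hrr, hhn, rfl⟩ | ⟨i, hi, rr, hrr, L, hL, rfl⟩) |
          ⟨i, hi, rr, hrr, L, hL, rfl⟩) | ⟨L, hocc, (⟨i, hi, rfl⟩ | rfl)⟩)
      · exact Option.some_ne_none _ hh.symm
      · injection hh with hh
        exact idx_ne_rej _ _ _ _ hh
      · injection hh with hh
        injection hh with hh
        injection hh with h1 h2
        omega
      · injection hh with hh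
        exact idx_ne_rej _ _ _ _ hh
      · injection hh with hh
        exact lift_ne_rej _ _ _ hh
    · obtain ⟨j', hj', i, hi, he⟩ := hmem
      exact idx_ne_rej _ _ _ _ he.symm
  have hTop : ∀ j < k, idxLit n (Ls j) ∈ T := by
    intro j hj
    have hrU' : Rule.mk (some (idxLit n (Ls j))) (liftLit '' (∅ : Set (Lit α)))
        ((liftLit '' (∅ : Set (Lit α))) ∪ {Lit.pos (ExtAtom.rej n (Rule.mk (some (Ls j)) ∅ ∅))})
        ∈ UpdProgram (n+1) (append1 n Pseq Q) := by
      simp only [UpdProgram, Set.mem_union, Set.mem_setOf_eq]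
      refine Or.inl (Or.inl (Or.inr ⟨n, by omega, Rule.mk (some (Ls j)) ∅ ∅, ?_, Ls j, rfl, rfl⟩))
      rw [hP'n]
      exact ⟨j, hj, rfl⟩
    have hnd' : ¬ Defeated (S' ∪ New) (Rule.mk (some (idxLit n (Ls j))) (liftLit '' (∅ : Set (Lit α)))
        ((liftLit '' (∅ : Set (Lit α))) ∪ {Lit.pos (ExtAtom.rej n (Rule.mk (some (Ls j)) ∅ ∅))})) := by
      rintro ⟨x, hx, hxS⟩
      rcases hx with ⟨y, hy, -⟩ | hx
      · exact Set.notMem_empty y hy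
      · rw [Set.mem_singleton_iff] at hx
        rw [hx] at hxS
        exact hrejn j hj hxS
    have hHT := hTmod _ ⟨_, hrU', hnd', rfl⟩
      ⟨by rintro x ⟨y, hy, -⟩; exact absurd hy (Set.notMem_empty y),
       by intro L hL; exact absurd hL (Set.notMem_empty L)⟩
    obtain ⟨M, hM, hMT⟩ := hHT
    injection hM with hM
    rwa [← hM] at hMT
  have hoccLs : ∀ j < k, OccursIn (n+1) (append1 n Pseq Q) (Ls j) := by
    intro j hj
    refine ⟨n, by omega, Rule.mk (some (Ls j)) ∅ ∅, ?_, Or.inl rfl⟩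
    rw [hP'n]
    exact ⟨j, hj, rfl⟩
  have hTNewAux : ∀ j < k, ∀ d ≤ n, idxLit (n - d) (Ls j) ∈ T := by
    intro j hj d
    induction d with
    | zero => intro _; simpa using hTop j hj
    | succ d ih =>
      intro hd
      have hprev : idxLit (n - d) (Ls j) ∈ T := ih (by omega)
      have hstep : n - (d+1) + 1 = n - d := by omega
      have hrU' : Rule.mk (some (idxLit (n - (d+1)) (Ls j))) {idxLit (n - (d+1) + 1) (Ls j)}
          (∅ : Set (Lit (ExtAtom α))) ∈ UpdProgram (n+1) (append1 n Pseq Q) := by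
        simp only [UpdProgram, Set.mem_union, Set.mem_setOf_eq]
        exact Or.inr ⟨Ls j, hoccLs j hj, Or.inl ⟨n - (d+1), by omega, rfl⟩⟩
      have hHT := hTmod _ ⟨_, hrU', by rintro ⟨x, hx, -⟩; exact Set.notMem_empty x hx, rfl⟩
        ⟨Set.singleton_subset_iff.2 (by rw [hstep]; exact hprev),
         by intro L hL; exact absurd hL (Set.notMem_empty L)⟩
      obtain ⟨M, hM, hMT⟩ := hHT
      injection hM with hM
      rwa [← hM] at hMT
  have hTNew : New ⊆ T := by
    rintro x ⟨j, hj, i, hi, rfl⟩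
    have := hTNewAux j hj (n - i) (by omega)
    rwa [show n - (n - i) = i by omega] at this
  have hS'T : S' ⊆ T := by
    have hT0 : IsModel (T ∩ S') (Reduct (UpdProgram n Pseq) S') := by
      rintro r' ⟨r, hrU, hnd, rfl⟩ hb
      obtain ⟨hp, -⟩ := hb
      have hpS' : r.prem ⊆ S' := fun x hx => (hp hx).2
      have hpT : r.prem ⊆ T := fun x hx => (hp hx).1
      have hHS' := hS'.2.1 _ ⟨r, hrU, hnd, rfl⟩
        ⟨hpS', by intro L hL; exact absurd hL (Set.notMem_empty L)⟩
      obtain ⟨L, hL, hLS'⟩ := hHS'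
      have hnd'' : ¬ Defeated (S' ∪ New) r := by
        rintro ⟨x, hx1, hx2 | hx2⟩
        · exact hnd ⟨x, hx1, hx2⟩
        · exact hnbodyNew r hrU x hx1 hx2
      have hHT := hTmod _ ⟨r, hUmono hrU, hnd'', rfl⟩
        ⟨hpT, by intro L hL; exact absurd hL (Set.notMem_empty L)⟩
      obtain ⟨L', hL', hLT⟩ := hHT
      rw [hL] at hL'
      injection hL' with hLL
      exact ⟨L, hL, hLL ▸ hLT, hLL ▸ hLS'⟩
    have heq := hS'.2.2 (T ∩ S') Set.inter_subset_right hT0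
    intro x hx
    rw [← heq] at hx
    exact hx.1
  apply Set.Subset.antisymm hTsub
  rintro x (hx | hx)
  · exact hS'T hx
  · exact hTNew hx

end I3Min

/-- postulate I3: if the fact `L_0 ←` belongs to
`Bel((P⃗, {L_1 ←, …, L_k ←}))`, then the rule `L_0 ← L_1,…,L_k`
belongs to `Bel(P⃗)`. -/
theorem i3_holds {α : Type} (n : ℕ) (Pseq : ℕ → Set (Rule α))
    (k : ℕ) (Ls : ℕ → Lit α) (L0 : Lit α)
    (h : Rule.mk (some L0) ∅ ∅ ∈
      BelSeq (n + 1) (append1 n Pseq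
        { r | ∃ i < k, r = Rule.mk (some (Ls i)) ∅ ∅ })) :
    Rule.mk (some L0) { L | ∃ i < k, L = Ls i } ∅ ∈ BelSeq n Pseq := by
  intro S hS hbody
  obtain ⟨S', hS', hSeq⟩ := hS
  have hLs : ∀ j < k, liftLit (Ls j) ∈ S' := by
    intro j hj
    have hmem : Ls j ∈ S := hbody.1 ⟨j, hj, rfl⟩
    rw [hSeq] at hmem
    exact hmem
  have hUAS : UpdateAnswerSet (n+1)
      (append1 n Pseq { r | ∃ i < k, r = Rule.mk (some (Ls i)) ∅ ∅ }) S := by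
    refine ⟨S' ∪ { x | ∃ j < k, ∃ i ≤ n, x = idxLit i (Ls j) },
      ⟨main_cons hS' hLs, main_model hS' hLs, main_min hS' hLs⟩, ?_⟩
    rw [hSeq]
    ext L
    simp only [Set.mem_setOf_eq, Set.mem_union]
    constructor
    · exact fun hL => Or.inl hL
    · rintro (hL | ⟨j, hj, i, hi, he⟩)
      · exact hL
      · exact absurd he (lift_ne_idx _ _ _)
  have hRT := h S hUAS ⟨Set.empty_subset S, by intro L hL; exact absurd hL (Set.notMem_empty L)⟩
  obtain ⟨M, hM, hMS⟩ := hRT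
  injection hM with hM
  exact ⟨L0, rfl, by rw [hM]; exact hMS⟩
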